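/- Let G be a graph on vertex set {1,...,n}. For any 1 ≤ i < j ≤ n, the number of s-cliques in the shifted graph S_{ij}(G) is at least the number of s-cliques in G. -/
import Mathlib


open SimpleGraph Finset

/-- `G` contains a linear forest with `k` edges: a subgraph that is acyclic
with maximum degree at most 2 and exactly `k` edges. -/
def containsLinearForest {V : Type*} (G : SimpleGraph V) (k : ℕ) : Prop :=
  ∃ H : SimpleGraph V, H ≤ G ∧ H.IsAcyclic ∧ (∀ v, (H.neighborSet v).ncard ≤ 2) ∧
    H.edgeSet.ncard = k

/-- `G` contains a matching with `k` edges. -/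
def containsMatching {V : Type*} (G : SimpleGraph V) (k : ℕ) : Prop :=
  ∃ H : SimpleGraph V, H ≤ G ∧ (∀ v, (H.neighborSet v).ncard ≤ 1) ∧ H.edgeSet.ncard = k

/-- Number of `s`-cliques (copies of `K_s`) in `G`. -/
noncomputable def cliqueCount {V : Type*} (G : SimpleGraph V) (s : ℕ) : ℕ :=
  {S : Finset V | G.IsNClique s S}.ncard

/-- Number of copies of `K*_{s,t}` in `G`: pairs `(W₁, W₂)` of disjoint vertex sets with
`|W₁| = s`, `|W₂| = t`, `W₁` a clique and all `W₁`–`W₂` edges present. -/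
noncomputable def kstCount {V : Type*} (G : SimpleGraph V) (s t : ℕ) : ℕ :=
  {p : Finset V × Finset V | p.1.card = s ∧ p.2.card = t ∧ Disjoint p.1 p.2 ∧
    G.IsClique (p.1 : Set V) ∧ ∀ a ∈ p.1, ∀ b ∈ p.2, G.Adj a b}.ncard

open scoped Classical in
/-- Kelmans shifting operation on a single edge. -/
noncomputable def shiftEdge {n : ℕ} (G : SimpleGraph (Fin n)) (i j : Fin n)
    (e : Sym2 (Fin n)) : Sym2 (Fin n) :=
  if j ∈ e ∧ i ∉ e ∧ e.map (fun x => if x = j then i else x) ∉ G.edgeSet then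
    e.map (fun x => if x = j then i else x)
  else e

/-- The shifted graph `S_{ij}(G)`. -/
noncomputable def shiftGraph {n : ℕ} (G : SimpleGraph (Fin n)) (i j : Fin n) :
    SimpleGraph (Fin n) :=
  SimpleGraph.fromEdgeSet (shiftEdge G i j '' G.edgeSet)

section helpers

variable {n : ℕ} {G : SimpleGraph (Fin n)} {i j a b : Fin n}

open scoped Classical

lemma shiftEdge_mem_aux (h : G.Adj a b)
    (hcond : ¬ (j ∈ s(a,b) ∧ i ∉ s(a,b) ∧
      Sym2.map (fun x => if x = j then i else x) s(a,b) ∉ G.edgeSet)) :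
    (shiftGraph G i j).Adj a b := by
  rw [shiftGraph, fromEdgeSet_adj]
  refine ⟨⟨s(a,b), h, ?_⟩, h.ne⟩
  rw [shiftEdge, if_neg hcond]

lemma adjA (h : G.Adj a b) (hja : a ≠ j) (hjb : b ≠ j) :
    (shiftGraph G i j).Adj a b := by
  apply shiftEdge_mem_aux h
  simp [Sym2.mem_iff, hja.symm, hjb.symm]

lemma adjA' (h : G.Adj a b) (hi : i = a ∨ i = b) :
    (shiftGraph G i j).Adj a b := by
  apply shiftEdge_mem_aux h
  simp only [Sym2.mem_iff, not_and, not_not]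
  intro _ hcon
  exact absurd hi hcon

lemma adjD (hne : i ≠ j) (hja : G.Adj j a) (hia : G.Adj i a) :
    (shiftGraph G i j).Adj j a := by
  apply shiftEdge_mem_aux hja
  simp only [Sym2.mem_iff, not_and, not_not]
  intro _ _
  have haj : a ≠ j := hja.ne'
  rw [Sym2.map_pair_eq]
  simp only [if_pos rfl, if_neg haj, mem_edgeSet]
  exact hia

lemma adjB (hne : i ≠ j) (hja : G.Adj j a) (hai : a ≠ i) :
    (shiftGraph G i j).Adj i a := by
  by_cases hGia : G.Adj i a
  · exact adjA' hGia (Or.inl rfl)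
  · rw [shiftGraph, fromEdgeSet_adj]
    have haj : a ≠ j := hja.ne'
    refine ⟨⟨s(j,a), hja, ?_⟩, hai.symm⟩
    have hcond : j ∈ s(j,a) ∧ i ∉ s(j,a) ∧
        Sym2.map (fun x => if x = j then i else x) s(j,a) ∉ G.edgeSet := by
      refine ⟨by simp, ?_, ?_⟩
      · simp only [Sym2.mem_iff, not_or]
        exact ⟨hne, fun h => hai h.symm⟩
      · rw [Sym2.map_pair_eq]
        simp only [if_pos rfl, if_neg haj, mem_edgeSet]
        exact hGia
    rw [shiftEdge, if_pos hcond, Sym2.map_pair_eq]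
    simp [if_neg haj]

/-- If every vertex of `T` other than `i,j` is `G`-adjacent to `i`, then a `G`-clique `T`
is also a clique in the shifted graph. -/
lemma cliqueShift (hne : i ≠ j) {T : Finset (Fin n)} (hT : G.IsClique (T : Set (Fin n)))
    (H : ∀ a ∈ T, a ≠ i → a ≠ j → G.Adj i a) :
    (shiftGraph G i j).IsClique (T : Set (Fin n)) := by
  have key : ∀ b ∈ T, j ∈ T → j ≠ b → (shiftGraph G i j).Adj j b := by
    intro b hb hjT hjb
    have hadj : G.Adj j b := hT hjT hb hjb
    by_cases hbi : b = i
    · exact adjA' hadj (Or.inr hbi.symm)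
    · exact adjD hne hadj (H b hb hbi (Ne.symm hjb))
  intro a ha b hb hab
  by_cases haj : a = j
  · subst haj; exact key b hb ha hab
  · by_cases hbj : b = j
    · subst hbj; exact (key a ha hb (Ne.symm hab)).symm
    · exact adjA (hT ha hb hab) haj hbj

lemma shifted_clique (hne : i ≠ j) {T : Finset (Fin n)} {s : ℕ}
    (hT : G.IsNClique s T) (hj : j ∈ T) (hi : i ∉ T) :
    (shiftGraph G i j).IsNClique s (insert i (T.erase j)) := by
  have hiT : i ∉ T.erase j := fun h => hi (Finset.mem_of_mem_erase h)
  constructor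
  · intro a ha b hb hab
    simp only [Finset.coe_insert, Set.mem_insert_iff, Finset.mem_coe] at ha hb
    have keyi : ∀ c, c ∈ T.erase j → (shiftGraph G i j).Adj i c := by
      intro c hc
      have hcj : c ≠ j := Finset.ne_of_mem_erase hc
      have hcT : c ∈ T := Finset.mem_of_mem_erase hc
      have hci : c ≠ i := fun h => hi (h ▸ hcT)
      exact adjB hne (hT.1 hj hcT (Ne.symm hcj)) hci
    rcases ha with rfl | ha
    · rcases hb with rfl | hb
      · exact absurd rfl hab
      · exact keyi b hb
    · rcases hb with rfl | hb
      · exact (keyi a ha).symm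
      · exact adjA (hT.1 (Finset.mem_of_mem_erase ha) (Finset.mem_of_mem_erase hb) hab)
          (Finset.ne_of_mem_erase ha) (Finset.ne_of_mem_erase hb)
  · rw [Finset.card_insert_of_notMem hiT, Finset.card_erase_of_mem hj, hT.2]
    have hs : 0 < s := hT.2 ▸ Finset.card_pos.2 ⟨j, hj⟩
    omega

end helpers

/-- Shifting does not decrease the number of `s`-cliques. -/
theorem stmt2 {n : ℕ} (G : SimpleGraph (Fin n)) (i j : Fin n) (hij : i < j) (s : ℕ) :
    cliqueCount G s ≤ cliqueCount (shiftGraph G i j) s := by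
  classical
  have hne : i ≠ j := hij.ne
  set G' := shiftGraph G i j with hG'
  -- key facts about failing cliques
  have fail : ∀ S : Finset (Fin n), G.IsNClique s S → ¬ G'.IsNClique s S →
      j ∈ S ∧ i ∉ S := by
    intro S hS hS'
    have hnc : ¬ G'.IsClique (S : Set (Fin n)) := fun h => hS' ⟨h, hS.2⟩
    have hj : j ∈ S := by
      by_contra hj
      apply hnc
      intro a ha b hb hab
      exact adjA (hS.1 ha hb hab) (fun h => hj (h ▸ ha)) (fun h => hj (h ▸ hb))
    have hi : i ∉ S := by
      intro hi
      apply hnc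
      apply cliqueShift hne hS.1
      intro a ha hai _
      exact hS.1 hi ha (Ne.symm hai)
    exact ⟨hj, hi⟩
  apply Set.ncard_le_ncard_of_injOn
    (fun S => if G'.IsNClique s S then S else insert i (S.erase j))
  · intro S hS
    simp only [Set.mem_setOf_eq] at hS ⊢
    by_cases hS' : G'.IsNClique s S
    · rwa [if_pos hS']
    · rw [if_neg hS']
      obtain ⟨hj, hi⟩ := fail S hS hS'
      exact shifted_clique hne hS hj hi
  · intro S hS T hT hST
    simp only [Set.mem_setOf_eq] at hS hT
    simp only at hST
    by_cases hS' : G'.IsNClique s S <;> by_cases hT' : G'.IsNClique s T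
    · rwa [if_pos hS', if_pos hT'] at hST
    · -- S stays, T gets shifted: contradiction
      exfalso
      rw [if_pos hS', if_neg hT'] at hST
      obtain ⟨hjT, hiT⟩ := fail T hT hT'
      -- S = insert i (T.erase j), so i ∈ S and T.erase j = S.erase i
      have hiS : i ∈ S := hST ▸ Finset.mem_insert_self i _
      have hiTe : i ∉ T.erase j := fun h => hiT (Finset.mem_of_mem_erase h)
      have hTe : T.erase j = S.erase i := by
        rw [hST, Finset.erase_insert hiTe]
      apply hT'
      refine ⟨?_, hT.2⟩
      apply cliqueShift hne hT.1
      intro a ha hai haj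
      have haS : a ∈ S := Finset.mem_of_mem_erase (hTe ▸ Finset.mem_erase.2 ⟨haj, ha⟩)
      exact hS.1 hiS haS (Ne.symm hai)
    · -- symmetric
      exfalso
      rw [if_neg hS', if_pos hT'] at hST
      obtain ⟨hjS, hiS⟩ := fail S hS hS'
      have hiT : i ∈ T := hST ▸ Finset.mem_insert_self i _
      have hiSe : i ∉ S.erase j := fun h => hiS (Finset.mem_of_mem_erase h)
      have hSe : S.erase j = T.erase i := by
        rw [← hST, Finset.erase_insert hiSe]
      apply hS'
      refine ⟨?_, hS.2⟩
      apply cliqueShift hne hS.1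
      intro a ha hai haj
      have haT : a ∈ T := Finset.mem_of_mem_erase (hSe ▸ Finset.mem_erase.2 ⟨haj, ha⟩)
      exact hT.1 hiT haT (Ne.symm hai)
    · rw [if_neg hS', if_neg hT'] at hST
      obtain ⟨hjS, hiS⟩ := fail S hS hS'
      obtain ⟨hjT, hiT⟩ := fail T hT hT'
      have hiSe : i ∉ S.erase j := fun h => hiS (Finset.mem_of_mem_erase h)
      have hiTe : i ∉ T.erase j := fun h => hiT (Finset.mem_of_mem_erase h)
      have h1 : S.erase j = T.erase j := by
        have := congrArg (fun X => Finset.erase X i) hST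
        simpa [Finset.erase_insert hiSe, Finset.erase_insert hiTe] using this
      calc S = insert j (S.erase j) := (Finset.insert_erase hjS).symm
        _ = insert j (T.erase j) := by rw [h1]
        _ = T := Finset.insert_erase hjT
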